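/- arXiv:1304.4407 — 2 statements merged into one kernel-verified Lean document; each statement's English description precedes it below -/
import Mathlib

section
/- Let λ > 0 and y ∈ ℝ^M, and let x⋆ be a minimizer of problem (P). Suppose the norm A is decomposable at u⋆ := L* x⋆ with data (T, e), and set S := T⊥. If for every h ∈ ker(Φ) with h ≠ 0 one has ⟨L_T* h, e⟩ < A(L_S* h), then x⋆ is the unique minimizer of (P). -/
open RealInnerProductSpace

noncomputable section

abbrev Euc (n : ℕ) := EuclideanSpace ℝ (Fin n)

def proj {n : ℕ} (V : Submodule ℝ (Euc n)) : Euc n →L[ℝ] Euc n :=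
  V.subtypeL.comp (V.orthogonalProjectionOnto)

def dualNorm {n : ℕ} (A : Euc n → ℝ) (α : Euc n) : ℝ :=
  sSup {r : ℝ | ∃ v : Euc n, A v ≤ 1 ∧ r = ⟪α, v⟫}

def subdiff {n : ℕ} (f : Euc n → ℝ) (x : Euc n) : Set (Euc n) :=
  {g : Euc n | ∀ y : Euc n, f x + ⟪g, y - x⟫ ≤ f y}

def IsNorm {n : ℕ} (A : Euc n → ℝ) : Prop :=
  (∀ x, A x = 0 ↔ x = 0) ∧ (∀ (c : ℝ) (x : Euc n), A (c • x) = |c| * A x) ∧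
    (∀ x y, A (x + y) ≤ A x + A y)

def Decomposable {n : ℕ} (A : Euc n → ℝ) (u : Euc n) (T : Submodule ℝ (Euc n)) (e : Euc n) :
    Prop :=
  e ∈ T ∧
  subdiff A u = {α : Euc n | proj T α = e ∧ dualNorm A (proj Tᗮ α) ≤ 1} ∧
  ∀ z : Euc n, z ∈ Tᗮ →
    A z = sSup {r : ℝ | ∃ v ∈ (Tᗮ : Submodule ℝ (Euc n)), dualNorm A v ≤ 1 ∧ r = ⟪v, z⟫}

def obj {N M P : ℕ} (Φ : Euc N →L[ℝ] Euc M) (L : Euc P →L[ℝ] Euc N) (A : Euc P → ℝ)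
    (y : Euc M) (lam : ℝ) (x : Euc N) : ℝ :=
  (1/2) * ‖y - Φ x‖^2 + lam * A (ContinuousLinearMap.adjoint L x)

def SC {N M P : ℕ} (Φ : Euc N →L[ℝ] Euc M) (L : Euc P →L[ℝ] Euc N) (A : Euc P → ℝ)
    (x : Euc N) (η : Euc M) (α : Euc P) : Prop :=
  α ∈ subdiff A (ContinuousLinearMap.adjoint L x) ∧
  ContinuousLinearMap.adjoint Φ η = L α ∧
  L α ∈ subdiff (fun z => A (ContinuousLinearMap.adjoint L z)) x

def breg {n : ℕ} (A : Euc n → ℝ) (α u u₀ : Euc n) : ℝ :=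
  A u - A u₀ - ⟪α, u - u₀⟫

lemma proj_of_mem {n : ℕ} {V : Submodule ℝ (Euc n)} {w : Euc n} (h : w ∈ V) : proj V w = w := by
  exact Submodule.starProjection_eq_self_iff.mpr h

lemma proj_orth_of_mem {n : ℕ} {V : Submodule ℝ (Euc n)} {w : Euc n} (h : w ∈ V) :
    proj Vᗮ w = 0 := by
  exact Submodule.starProjection_orthogonal_apply_eq_zero h

lemma proj_of_mem_orth {n : ℕ} {V : Submodule ℝ (Euc n)} {w : Euc n} (h : w ∈ Vᗮ) :
    proj V w = 0 := by
  simp only [proj, ContinuousLinearMap.comp_apply, Submodule.orthogonalProjectionOnto_apply_of_mem_orthogonal h, map_zero]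

lemma proj_mem' {n : ℕ} (V : Submodule ℝ (Euc n)) (w : Euc n) : proj V w ∈ V :=
  SetLike.coe_mem (V.orthogonalProjectionOnto w)

lemma proj_add_proj {n : ℕ} (V : Submodule ℝ (Euc n)) (w : Euc n) :
    proj V w + proj Vᗮ w = w :=
  Submodule.starProjection_add_starProjection_orthogonal (K := V) w

lemma dualNorm_zero {n : ℕ} (A : Euc n → ℝ) (hA : IsNorm A) : dualNorm A 0 = 0 := by
  have hset : {r : ℝ | ∃ v : Euc n, A v ≤ 1 ∧ r = ⟪(0:Euc n), v⟫} = {0} := by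
    ext r
    constructor
    · rintro ⟨v, _, rfl⟩; simp
    · rintro rfl
      exact ⟨0, by simp [(hA.1 0).mpr rfl], by simp⟩
  rw [dualNorm, hset, csSup_singleton]

lemma A_neg {n : ℕ} (A : Euc n → ℝ) (hA : IsNorm A) (z : Euc n) : A (-z) = A z := by
  have := hA.2.1 (-1) z
  simpa using this

set_option maxHeartbeats 1000000 in
theorem stmt0 {N M P : ℕ} (Φ : Euc N →L[ℝ] Euc M) (L : Euc P →L[ℝ] Euc N)
    (A : Euc P → ℝ) (hA : IsNorm A) (lam : ℝ) (hlam : 0 < lam) (y : Euc M)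
    (xs : Euc N) (hmin : ∀ x, obj Φ L A y lam xs ≤ obj Φ L A y lam x)
    (T : Submodule ℝ (Euc P)) (e : Euc P)
    (hdec : Decomposable A (ContinuousLinearMap.adjoint L xs) T e)
    (hNSP : ∀ h : Euc N, Φ h = 0 → h ≠ 0 →
      ⟪proj T (ContinuousLinearMap.adjoint L h), e⟫ < A (proj Tᗮ (ContinuousLinearMap.adjoint L h))) :
    ∀ x : Euc N, (∀ z, obj Φ L A y lam x ≤ obj Φ L A y lam z) → x = xs := by
  intro x hx
  by_contra hne
  set Lc := ContinuousLinearMap.adjoint L with hLc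
  set a := y - Φ x with ha
  set b := y - Φ xs with hb
  set p := Lc x with hp
  set q := Lc xs with hq
  have hobj : obj Φ L A y lam x = obj Φ L A y lam xs := le_antisymm (hx xs) (hmin x)
  -- midpoint argument: Φ x = Φ xs
  have hΦ : Φ x = Φ xs := by
    set m := (1/2 : ℝ) • (x + xs) with hm
    have h1 : y - Φ m = (1/2 : ℝ) • (a + b) := by
      rw [hm, map_smul, map_add, ha, hb]
      module
    have h2 : Lc m = (1/2 : ℝ) • (p + q) := by
      rw [hm, map_smul, map_add]
    have hA1 : A ((1/2 : ℝ) • (p + q)) ≤ (1/2) * (A p + A q) := by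
      rw [hA.2.1]
      have := hA.2.2 p q
      rw [abs_of_pos (by norm_num : (0:ℝ) < 1/2)]
      linarith
    have hpar : ‖a + b‖^2 + ‖a - b‖^2 = 2 * (‖a‖^2 + ‖b‖^2) := by
      have h := parallelogram_law_with_norm ℝ a b
      linarith
    have hnm : ‖y - Φ m‖^2 = (1/4) * ‖a + b‖^2 := by
      rw [h1, norm_smul]
      simp
      ring
    have hmge : obj Φ L A y lam xs ≤ obj Φ L A y lam m := hmin m
    have hmval : obj Φ L A y lam m = (1/2) * ‖y - Φ m‖^2 + lam * A (Lc m) := rfl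
    have hxval : obj Φ L A y lam x = (1/2) * ‖a‖^2 + lam * A p := rfl
    have hsval : obj Φ L A y lam xs = (1/2) * ‖b‖^2 + lam * A q := rfl
    have hAm : lam * A (Lc m) ≤ lam * ((1/2) * (A p + A q)) := by
      rw [h2]; exact mul_le_mul_of_nonneg_left hA1 hlam.le
    have hsq : ‖a - b‖^2 ≤ 0 := by
      rw [hmval, hnm] at hmge
      rw [hxval, hsval] at hobj
      rw [hsval] at hmge
      nlinarith
    have : a - b = 0 := by
      have : ‖a - b‖ = 0 := by nlinarith [norm_nonneg (a - b), sq_nonneg ‖a - b‖]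
      exact norm_eq_zero.mp this
    have hab : a = b := sub_eq_zero.mp this
    rw [ha, hb] at hab
    exact sub_right_injective hab
  -- equal objective values give equal A-values
  have hab : a = b := by rw [ha, hb, hΦ]
  have hAeq : A p = A q := by
    have hxval : obj Φ L A y lam x = (1/2) * ‖a‖^2 + lam * A p := rfl
    have hsval : obj Φ L A y lam xs = (1/2) * ‖b‖^2 + lam * A q := rfl
    rw [hxval, hsval, hab] at hobj
    have : lam * A p = lam * A q := by linarith
    exact mul_left_cancel₀ (ne_of_gt hlam) this
  set d := p - q with hd
  set z := proj Tᗮ d with hz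
  have hzmem : z ∈ Tᗮ := proj_mem' _ _
  -- key bound from subgradients
  have hkey : ∀ v : Euc P, v ∈ Tᗮ → dualNorm A v ≤ 1 → ⟪v, z⟫ ≤ -⟪e, d⟫ := by
    intro v hv hv1
    have hα : e + v ∈ subdiff A q := by
      rw [hdec.2.1]
      constructor
      · rw [map_add, proj_of_mem hdec.1, proj_of_mem_orth hv, add_zero]
      · rw [map_add, proj_orth_of_mem hdec.1, proj_of_mem hv, zero_add]
        exact hv1
    have hsub := hα p
    rw [← hd, hAeq] at hsub
    have hαd : ⟪e + v, d⟫ ≤ 0 := by linarith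
    have hvd : ⟪v, d⟫ = ⟪v, z⟫ := by
      conv_lhs => rw [← proj_add_proj T d]
      rw [inner_add_right, ← hz]
      have h0 : ⟪v, proj T d⟫ = 0 := by
        rw [real_inner_comm]
        exact hv (proj T d) (proj_mem' T d)
      rw [h0, zero_add]
    rw [inner_add_left, hvd] at hαd
    linarith
  -- sup of the set is A z
  have hAz := hdec.2.2 z hzmem
  have hAzle : A z ≤ -⟪e, d⟫ := by
    rw [hAz]
    apply csSup_le
    · exact ⟨0, 0, zero_mem _, by rw [dualNorm_zero A hA]; norm_num, by simp⟩
    · rintro r ⟨v, hv, hv1, rfl⟩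
      exact hkey v hv hv1
  -- NSP applied to xs - x
  have hδ : Lc (xs - x) = -d := by
    rw [map_sub, ← hp, ← hq, hd]
    abel
  have hlt := hNSP (xs - x) (by rw [map_sub, hΦ, sub_self]) (sub_ne_zero.mpr (fun h => hne h.symm))
  rw [hδ, map_neg, map_neg, inner_neg_left, A_neg A hA, ← hz] at hlt
  have hed : ⟪e, d⟫ = ⟪proj T d, e⟫ := by
    conv_lhs => rw [← proj_add_proj T d]
    rw [inner_add_right, ← hz]
    have h0 : ⟪e, z⟫ = 0 := (Submodule.mem_orthogonal _ _).mp hzmem e hdec.1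
    rw [h0, add_zero, real_inner_comm]
  rw [← hed] at hlt
  linarith
end
end

section
/- Let L : ℝ^P → ℝ^N and L̃ : ℝ^P → ℝ^N be linear maps with L̃ ∘ L* = Id on ℝ^N, where L* is the adjoint of L. Let T₀ ⊆ ℝ^P be a linear subspace and S₀ := T₀⊥. Then ker(P_{S₀} ∘ L*) ⊆ Im(L̃ ∘ P_{T₀}), i.e. the kernel of L_{S₀}* is contained in the image of L̃_{T₀}. -/
open RealInnerProductSpace

noncomputable section

theorem stmt14 {N P : ℕ} (L Lt : Euc P →L[ℝ] Euc N)
    (hdual : Lt.comp (ContinuousLinearMap.adjoint L) = ContinuousLinearMap.id ℝ (Euc N))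
    (T₀ : Submodule ℝ (Euc P)) :
    ∀ h : Euc N, proj T₀ᗮ (ContinuousLinearMap.adjoint L h) = 0 → ∃ v : Euc P, Lt (proj T₀ v) = h := by
  intro h hh
  refine ⟨ContinuousLinearMap.adjoint L h, ?_⟩
  have h0 : Submodule.orthogonalProjectionOnto T₀ᗮ (ContinuousLinearMap.adjoint L h) = 0 := by
    have := hh
    simp only [proj, ContinuousLinearMap.comp_apply, Submodule.subtypeL_apply] at this
    exact_mod_cast this
  have hmem : ContinuousLinearMap.adjoint L h ∈ T₀ := by
    have h1 : ContinuousLinearMap.adjoint L h ∈ T₀ᗮᗮ :=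
      Submodule.orthogonalProjectionOnto_eq_zero_iff.1 h0
    rwa [Submodule.orthogonal_orthogonal] at h1
  have hproj : proj T₀ (ContinuousLinearMap.adjoint L h) = ContinuousLinearMap.adjoint L h := by
    simp only [proj, ContinuousLinearMap.comp_apply, Submodule.subtypeL_apply]
    exact (Submodule.starProjection_eq_self_iff (K := T₀)).2 hmem
  rw [hproj]
  exact DFunLike.congr_fun hdual h
end
end
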